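/- Let $\ell$ be a prime, $q$ a prime power with multiplicative order $n$ modulo $\ell$, where $2 \leq n < \ell$, and let $r = \mathrm{ord}_\ell(q^n-1)$. Let $K = \mathbb{Q}_\ell$ (or an unramified extension), fix a primitive $\ell^i$-th root of unity $\zeta_i$ for $0 < i \leq r$, and set $\omega_i = \zeta_i + \zeta_i^q + \cdots + \zeta_i^{q^{n-1}}$. Then the fixed field $L_i$ of the subgroup of $\mathrm{Gal}(K(\zeta_i)/K)$ generated by (the automorphism corresponding to) $q$ satisfies $L_i = K(\omega_i)$, and moreover $\omega_i - n$ is a uniformizer of the ring of integers of $L_i$. -/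

import Mathlib

open Finset Polynomial in
theorem aux_arith (ℓ q n : ℕ) [Fact ℓ.Prime] (hn : orderOf (q : ZMod ℓ) = n)
    (h2n : 2 ≤ n) (hnℓ : n < ℓ) :
    (∀ k, 1 ≤ k → k < n → ℓ ∣ ∑ j ∈ range n, (q ^ j).choose k) ∧
      ¬ ℓ ∣ ∑ j ∈ range n, (q ^ j).choose n := by
  have hprime : ℓ.Prime := Fact.out
  set x : ZMod ℓ := (q : ZMod ℓ) with hx
  have hxn : x ^ n = 1 := hn ▸ pow_orderOf_eq_one x
  have hxm : ∀ m, 0 < m → m < n → x ^ m ≠ 1 := by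
    intro m h1 h2 h3
    have := orderOf_le_of_pow_eq_one h1 h3
    omega
  have hP : ∀ m, 0 < m → m ≤ n →
      (∑ j ∈ range n, (x ^ m) ^ j) = if m = n then (n : ZMod ℓ) else 0 := by
    intro m h1 h2
    rcases eq_or_lt_of_le h2 with h | h
    · subst h
      rw [if_pos rfl]
      have : x ^ m = 1 := hxn
      simp [this]
    · rw [if_neg (by omega)]
      rw [geom_sum_eq (hxm m h1 h)]
      rw [← pow_mul, mul_comm m n, pow_mul, hxn, one_pow, sub_self, zero_div]
  have key : ∀ k, 1 ≤ k → k ≤ n →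
      (Nat.factorial k : ZMod ℓ) * (∑ j ∈ range n, ((q ^ j).choose k : ZMod ℓ))
        = if k = n then (n : ZMod ℓ) else 0 := by
    intro k hk1 hkn
    set f : (ZMod ℓ)[X] := ∏ t ∈ range k, (X - C (t : ZMod ℓ)) with hf
    have hmonic : f.Monic := monic_prod_of_monic _ _ (fun t _ => monic_X_sub_C _)
    have hdeg : f.natDegree = k := by
      rw [hf, natDegree_prod_of_monic _ _ (fun t _ => monic_X_sub_C _)]
      have h1 : ∀ t ∈ range k, (X - C (t : ZMod ℓ)).natDegree = 1 :=
        fun t _ => natDegree_X_sub_C _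
      rw [Finset.sum_congr rfl h1]
      simp
    have hcoeff0 : f.coeff 0 = 0 := by
      rw [coeff_zero_eq_eval_zero, hf, eval_prod]
      refine prod_eq_zero (mem_range.2 (by omega : 0 < k)) ?_
      simp
    have hcoeffk : f.coeff k = 1 := by
      have := hmonic.coeff_natDegree
      rwa [hdeg] at this
    have hcast : ∀ m : ℕ, ((m.descFactorial k : ZMod ℓ)) = f.eval (m : ZMod ℓ) := by
      intro m
      rcases lt_or_ge m k with h | h
      · rw [Nat.descFactorial_eq_zero_iff_lt.2 h, Nat.cast_zero, hf, eval_prod]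
        symm
        refine prod_eq_zero (mem_range.2 h) ?_
        simp
      · rw [Nat.descFactorial_eq_prod_range, hf, eval_prod, Nat.cast_prod]
        refine prod_congr rfl fun t ht => ?_
        rw [Nat.cast_sub (le_trans (le_of_lt (mem_range.1 ht)) h)]
        simp
    have step1 : (Nat.factorial k : ZMod ℓ) * ∑ j ∈ range n, ((q ^ j).choose k : ZMod ℓ)
        = ∑ j ∈ range n, f.eval (x ^ j) := by
      rw [mul_sum]
      refine sum_congr rfl fun j _ => ?_
      have h1 : ((q ^ j).descFactorial k : ZMod ℓ)
          = (Nat.factorial k : ZMod ℓ) * ((q ^ j).choose k : ZMod ℓ) := by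
        rw [Nat.descFactorial_eq_factorial_mul_choose]; push_cast; ring
      rw [← h1, hcast]
      push_cast
      ring_nf
      rw [hx]
    rw [step1]
    have step2 : ∑ j ∈ range n, f.eval (x ^ j)
        = ∑ m ∈ range (k + 1), f.coeff m * ∑ j ∈ range n, (x ^ m) ^ j := by
      have : ∀ j, f.eval (x ^ j) = ∑ m ∈ range (k + 1), f.coeff m * (x ^ m) ^ j := by
        intro j
        rw [eval_eq_sum_range' (by omega : f.natDegree < k + 1)]
        refine sum_congr rfl fun m _ => ?_
        rw [← pow_mul, ← pow_mul, mul_comm j m]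
      rw [sum_congr rfl fun j _ => this j, sum_comm]
      exact sum_congr rfl fun m _ => (mul_sum _ _ _).symm
    rw [step2]
    rcases eq_or_lt_of_le hkn with hkn' | hkn'
    · subst hkn'
      rw [if_pos rfl]
      rw [Finset.sum_eq_single_of_mem k (mem_range.2 (by omega))]
      · rw [hcoeffk, one_mul, hP k hk1 le_rfl, if_pos rfl]
      · intro m hm hne
        rw [mem_range] at hm
        rcases Nat.eq_zero_or_pos m with h0 | h0
        · subst h0; rw [hcoeff0, zero_mul]
        · rw [hP m h0 (by omega), if_neg (by omega), mul_zero]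
    · rw [if_neg (by omega)]
      refine Finset.sum_eq_zero fun m hm => ?_
      rcases Nat.eq_zero_or_pos m with h0 | h0
      · subst h0; rw [hcoeff0, zero_mul]
      · rw [hP m h0 (by simp at hm; omega), if_neg (by simp at hm; omega), mul_zero]
  have hfact : ∀ k, k < ℓ → (Nat.factorial k : ZMod ℓ) ≠ 0 := by
    intro k hk h
    rw [ZMod.natCast_eq_zero_iff] at h
    have := (Nat.Prime.dvd_factorial hprime).1 h
    omega
  constructor
  · intro k hk1 hkn
    have hkey := key k hk1 (le_of_lt hkn)
    rw [if_neg (by omega)] at hkey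
    rcases mul_eq_zero.1 hkey with h | h
    · exact absurd h (hfact k (by omega))
    · rw [← Nat.cast_sum, ZMod.natCast_eq_zero_iff] at h
      exact h
  · intro hdvd
    have hkey := key n (by omega) le_rfl
    rw [if_pos rfl] at hkey
    rw [← Nat.cast_sum] at hkey
    rw [(ZMod.natCast_eq_zero_iff _ _).2 hdvd, mul_zero] at hkey
    have : ℓ ∣ n := (ZMod.natCast_eq_zero_iff _ _).1 hkey.symm
    have := Nat.le_of_dvd (by omega) this
    omega


open Polynomial in
theorem aux_irred (ℓ : ℕ) [Fact ℓ.Prime] (i : ℕ) (hi : 0 < i) :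
    Irreducible (Polynomial.cyclotomic (ℓ ^ i) ℚ_[ℓ]) := by
  have hp : ℓ.Prime := Fact.out
  obtain ⟨j, rfl⟩ : ∃ j, i = j + 1 := ⟨i - 1, by omega⟩
  have hℓu : ¬IsUnit (ℓ : ℤ_[ℓ]) := by
    rw [PadicInt.isUnit_iff, PadicInt.norm_p]
    intro h
    have h2 : (2 : ℝ) ≤ (ℓ : ℝ) := by exact_mod_cast hp.two_le
    rw [inv_eq_one] at h
    norm_num [h] at h2
  have hmonic : (cyclotomic (ℓ ^ (j + 1)) ℤ_[ℓ]).Monic := cyclotomic.monic _ _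
  set g : ℤ_[ℓ][X] := (cyclotomic (ℓ ^ (j + 1)) ℤ_[ℓ]).comp (X + C 1) with hgdef
  have hgmonic : g.Monic := hmonic.comp_X_add_C 1
  have hgmap : g = ((cyclotomic (ℓ ^ (j + 1)) ℤ).comp (X + 1)).map (Int.castRingHom ℤ_[ℓ]) := by
    rw [Polynomial.map_comp, map_cyclotomic]
    rw [hgdef, Polynomial.map_add, Polynomial.map_X, Polynomial.map_one, C_1]
  have hdegg : g.natDegree = (ℓ ^ (j + 1)).totient := by
    rw [hgdef, natDegree_comp, natDegree_cyclotomic, natDegree_X_add_C, mul_one]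
  have hdegZ : (((cyclotomic (ℓ ^ (j + 1)) ℤ).comp (X + 1))).natDegree
      = (ℓ ^ (j + 1)).totient := by
    rw [show (X + 1 : ℤ[X]) = X + C 1 by simp, natDegree_comp, natDegree_cyclotomic,
      natDegree_X_add_C, mul_one]
  have hE := cyclotomic_prime_pow_comp_X_add_one_isEisensteinAt ℓ j
  have hgE : g.IsEisensteinAt (Ideal.span {(ℓ : ℤ_[ℓ])}) := by
    constructor
    · rw [hgmonic.leadingCoeff]
      intro h
      exact hℓu (isUnit_of_dvd_one (Ideal.mem_span_singleton.1 h))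
    · intro k hk
      rw [hgmap, coeff_map]
      have hk' : k < (((cyclotomic (ℓ ^ (j + 1)) ℤ).comp (X + 1))).natDegree := by
        rw [hdegZ]; rw [hdegg] at hk; exact hk
      have := hE.mem hk'
      rw [Ideal.submodule_span_eq, Ideal.mem_span_singleton] at this
      rw [Ideal.mem_span_singleton]
      obtain ⟨c, hc⟩ := this
      exact ⟨(Int.castRingHom ℤ_[ℓ]) c, by rw [hc, map_mul, map_natCast]⟩
    · have hc0 : g.coeff 0 = (ℓ : ℤ_[ℓ]) := by
        rw [coeff_zero_eq_eval_zero, hgdef, eval_comp]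
        simp [eval_one_cyclotomic_prime_pow]
      rw [hc0, Ideal.span_singleton_pow, Ideal.mem_span_singleton]
      rintro ⟨c, hc⟩
      apply hℓu
      have hℓ0 : (ℓ : ℤ_[ℓ]) ≠ 0 := Nat.cast_ne_zero.2 hp.ne_zero
      have : (ℓ : ℤ_[ℓ]) * 1 = (ℓ : ℤ_[ℓ]) * ((ℓ : ℤ_[ℓ]) * c) := by
        rw [mul_one, ← mul_assoc, ← sq]; exact hc
      exact IsUnit.of_mul_eq_one _ (mul_left_cancel₀ hℓ0 this).symm
  have hspanprime : (Ideal.span {(ℓ : ℤ_[ℓ])}).IsPrime := by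
    rw [← PadicInt.maximalIdeal_eq_span_p]
    exact (inferInstance : (IsLocalRing.maximalIdeal ℤ_[ℓ]).IsMaximal).isPrime
  have hgirr : Irreducible g :=
    hgE.irreducible hspanprime hgmonic.isPrimitive (by rw [hdegg]; exact Nat.totient_pos.2 (pow_pos hp.pos _))
  have hirrZ : Irreducible (cyclotomic (ℓ ^ (j + 1)) ℤ_[ℓ]) := by
    have : g = algEquivAevalXAddC (1 : ℤ_[ℓ]) (cyclotomic (ℓ ^ (j + 1)) ℤ_[ℓ]) := by
      rw [hgdef]
      simp [algEquivAevalXAddC, algEquivOfCompEqX, comp]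
      rfl
    rw [this] at hgirr
    exact (MulEquiv.irreducible_iff (algEquivAevalXAddC (1 : ℤ_[ℓ]))).1 hgirr
  have := (hmonic.irreducible_iff_irreducible_map_fraction_map (K := ℚ_[ℓ])).1 hirrZ
  rwa [map_cyclotomic] at this


theorem aux_sum_factor {A L : Type*} [CommRing A] [CommRing L] [Algebra A L]
    (R : Subalgebra A L) (z : L) (s : Finset ℕ) (f : ℕ → L)
    (h : ∀ k ∈ s, ∃ y ∈ R, f k = z * y) : ∃ c ∈ R, ∑ k ∈ s, f k = z * c := by
  classical
  induction s using Finset.induction_on with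
  | empty => exact ⟨0, zero_mem _, by simp⟩
  | @insert a s ha ih =>
    obtain ⟨c, hc, hsum⟩ := ih (fun k hk => h k (Finset.mem_insert_of_mem hk))
    obtain ⟨y, hy, hfy⟩ := h _ (Finset.mem_insert_self _ _)
    exact ⟨y + c, add_mem hy hc, by rw [Finset.sum_insert ha, hfy, hsum, mul_add]⟩

theorem aux_prod_factor {A L : Type*} [CommRing A] [CommRing L] [Algebra A L]
    (R : Subalgebra A L) (z : L) {ι : Type*} (s : Finset ι) (f : ι → L)
    (h : ∀ t ∈ s, ∃ y ∈ R, f t = z * y) :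
    ∃ c ∈ R, ∏ t ∈ s, f t = z ^ s.card * c := by
  classical
  induction s using Finset.induction_on with
  | empty => exact ⟨1, one_mem _, by simp⟩
  | @insert a s ha ih =>
    obtain ⟨c, hc, hprod⟩ := ih (fun k hk => h k (Finset.mem_insert_of_mem hk))
    obtain ⟨y, hy, hfy⟩ := h _ (Finset.mem_insert_self _ _)
    refine ⟨y * c, mul_mem hy hc, ?_⟩
    rw [Finset.prod_insert ha, hfy, hprod, Finset.card_insert_of_notMem ha, pow_succ]
    ring

theorem aux_prod_factor2 {A L : Type*} [CommRing A] [CommRing L] [Algebra A L]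
    (R : Subalgebra A L) (z c0 : L) (hz : z ∈ R) (hc0 : c0 ∈ R)
    {ι : Type*} (s : Finset ι) (f : ι → L)
    (h : ∀ t ∈ s, ∃ y ∈ R, f t = c0 + z * y) :
    ∃ y ∈ R, ∏ t ∈ s, f t = c0 ^ s.card + z * y := by
  classical
  induction s using Finset.induction_on with
  | empty => exact ⟨0, zero_mem _, by simp⟩
  | @insert a s ha ih =>
    obtain ⟨y₂, hy₂, hprod⟩ := ih (fun k hk => h k (Finset.mem_insert_of_mem hk))
    obtain ⟨y₁, hy₁, hfy⟩ := h _ (Finset.mem_insert_self _ _)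
    refine ⟨c0 * y₂ + y₁ * c0 ^ s.card + z * (y₁ * y₂),
      add_mem (add_mem (mul_mem hc0 hy₂) (mul_mem hy₁ (pow_mem hc0 _))) (mul_mem hz (mul_mem hy₁ hy₂)), ?_⟩
    rw [Finset.prod_insert ha, hfy, hprod, Finset.card_insert_of_notMem ha, pow_succ]
    ring


set_option maxHeartbeats 1000000 in
theorem stmt_9 (ℓ q n r i : ℕ) [Fact ℓ.Prime] (hq : IsPrimePow q) (hndvd : ¬ ℓ ∣ q)
    (hn : orderOf (q : ZMod ℓ) = n) (h2n : 2 ≤ n) (hnℓ : n < ℓ)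
    (hr : r = padicValNat ℓ (q ^ n - 1)) (hi : 0 < i) (hir : i ≤ r)
    (L : Type*) [Field L] [Algebra ℚ_[ℓ] L] [Algebra ℤ_[ℓ] L]
    [IsScalarTower ℤ_[ℓ] ℚ_[ℓ] L]
    (ζ : L) (hζ : IsPrimitiveRoot ζ (ℓ ^ i))
    (hL : IntermediateField.adjoin ℚ_[ℓ] {ζ} = ⊤)
    (σ : L ≃ₐ[ℚ_[ℓ]] L) (hσ : σ ζ = ζ ^ q) :
    IntermediateField.fixedField (Subgroup.zpowers σ) =
        IntermediateField.adjoin ℚ_[ℓ] {∑ j ∈ Finset.range n, ζ ^ q ^ j} ∧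
      ∃ u : (integralClosure ℤ_[ℓ] L)ˣ,
        (∑ j ∈ Finset.range n, ζ ^ q ^ j) - (n : L) = (ζ - 1) ^ n * (u : integralClosure ℤ_[ℓ] L) := by
  classical
  have hp : ℓ.Prime := Fact.out
  set ω := ∑ j ∈ Finset.range n, ζ ^ q ^ j with hωdef
  set π := ζ - 1 with hπdef
  have hℓ3 : 3 ≤ ℓ := by omega
  have hq2 : 2 ≤ q := hq.two_le
  have hmpos : 0 < ℓ ^ i := pow_pos hp.pos i
  haveI : NeZero (ℓ ^ i) := ⟨hmpos.ne'⟩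
  have hqn1 : ℓ ^ i ∣ q ^ n - 1 := (pow_dvd_pow ℓ hir).trans (hr ▸ pow_padicValNat_dvd)
  have hqnpos : 1 ≤ q ^ n := Nat.one_le_pow _ _ (by omega)
  have hζqn : ζ ^ q ^ n = ζ := by
    have h1 : ζ ^ (q ^ n - 1) = 1 := (hζ.pow_eq_one_iff_dvd _).2 hqn1
    calc ζ ^ q ^ n = ζ ^ (q ^ n - 1) * ζ := by rw [← pow_succ]; congr 1; omega
    _ = ζ := by rw [h1, one_mul]
  -- integrality of ζ
  have hζint : IsIntegral ℤ_[ℓ] ζ := by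
    refine ⟨Polynomial.X ^ (ℓ ^ i) - Polynomial.C 1,
      Polynomial.monic_X_pow_sub_C 1 hmpos.ne', ?_⟩
    simp [Polynomial.eval₂_sub, hζ.pow_eq_one]
  have hζK : IsIntegral ℚ_[ℓ] ζ := by
    refine ⟨Polynomial.X ^ (ℓ ^ i) - Polynomial.C 1,
      Polynomial.monic_X_pow_sub_C 1 hmpos.ne', ?_⟩
    simp [Polynomial.eval₂_sub, hζ.pow_eq_one]
  haveI hFD : FiniteDimensional ℚ_[ℓ] L := by
    have h1 := IntermediateField.adjoin.finiteDimensional hζK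
    rw [hL] at h1
    exact (IntermediateField.topEquiv (F := ℚ_[ℓ]) (E := L)).toLinearEquiv.finiteDimensional
  have halgadj : Algebra.adjoin ℚ_[ℓ] {ζ} = ⊤ := by
    have h1 := IntermediateField.adjoin_simple_toSubalgebra_of_isAlgebraic hζK.isAlgebraic
    rw [hL] at h1
    rw [← h1, IntermediateField.top_toSubalgebra]
  set m : ℕ+ := ⟨ℓ ^ i, hmpos⟩ with hmdef
  haveI hcyc : IsCyclotomicExtension {(m : ℕ)} ℚ_[ℓ] L := by
    constructor
    · rintro n' hn'
      rw [Set.mem_singleton_iff] at hn'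
      subst hn'
      exact fun _ => ⟨ζ, hζ⟩
    · intro x
      have hx : x ∈ (⊤ : Subalgebra ℚ_[ℓ] L) := trivial
      rw [← halgadj] at hx
      refine Algebra.adjoin_mono ?_ hx
      rintro y hy
      rw [Set.mem_singleton_iff] at hy
      subst hy
      exact ⟨(m : ℕ), Set.mem_singleton _, hmpos.ne', hζ.pow_eq_one⟩
  haveI hGal : IsGalois ℚ_[ℓ] L := IsCyclotomicExtension.isGalois {(m : ℕ)} ℚ_[ℓ] L
  have hirr : Irreducible (Polynomial.cyclotomic ((m : ℕ+) : ℕ) ℚ_[ℓ]) := aux_irred ℓ i hi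
  have hfinrank : Module.finrank ℚ_[ℓ] L = (ℓ ^ i).totient :=
    IsCyclotomicExtension.finrank (n := (m : ℕ)) L hirr
  have hNπ : Algebra.norm ℚ_[ℓ] π = (ℓ : ℚ_[ℓ]) := by
    have hpp : IsPrimePow ((m : ℕ+) : ℕ) := ⟨ℓ, i, hp.prime, hi, rfl⟩
    have hm2 : m ≠ 2 := by
      intro h
      have h' : ((m : ℕ+) : ℕ) = ((2 : ℕ+) : ℕ) := congrArg _ h
      have h'' : ℓ ^ i = 2 := h'
      have hle : ℓ ≤ ℓ ^ i := Nat.le_self_pow (by omega) ℓ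
      omega
    have hres := hζ.sub_one_norm_isPrimePow (n := (m : ℕ)) hpp hirr (fun h => hm2 (PNat.eq h))
    rw [hres, show ((m : ℕ+) : ℕ) = ℓ ^ i from rfl, hp.pow_minFac (by omega : i ≠ 0)]
  -- extensionality on ζ
  have hext : ∀ f g : L ≃ₐ[ℚ_[ℓ]] L, f ζ = g ζ → f = g := by
    intro f g hfg
    have halg : ∀ x : ℚ_[ℓ], (f : L →+* L) (algebraMap ℚ_[ℓ] L x) = (g : L →+* L) (algebraMap ℚ_[ℓ] L x) := by
      intro x
      rw [show (f : L →+* L) (algebraMap ℚ_[ℓ] L x) = f (algebraMap ℚ_[ℓ] L x) from rfl]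
      rw [show (g : L →+* L) (algebraMap ℚ_[ℓ] L x) = g (algebraMap ℚ_[ℓ] L x) from rfl]
      rw [f.commutes, g.commutes]
    let E : IntermediateField ℚ_[ℓ] L :=
      Subfield.toIntermediateField (RingHom.eqLocusField (f : L →+* L) (g : L →+* L)) halg
    have h1 : IntermediateField.adjoin ℚ_[ℓ] {ζ} ≤ E := by
      rw [IntermediateField.adjoin_le_iff]
      rintro y hy
      rw [Set.mem_singleton_iff] at hy
      subst hy
      exact hfg
    rw [hL] at h1
    exact AlgEquiv.ext fun x => h1 (IntermediateField.mem_top (x := x))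
  have hσpow : ∀ k : ℕ, (σ ^ k) ζ = ζ ^ q ^ k := by
    intro k
    induction k with
    | zero => simp
    | succ k ih =>
      rw [pow_succ, AlgEquiv.mul_apply, hσ, map_pow, ih, ← pow_mul, ← pow_succ]
  have horder : orderOf σ = n := by
    rw [orderOf_eq_iff (by omega : 0 < n)]
    constructor
    · apply hext
      rw [hσpow n, hζqn]
      rfl
    · intro k hkn hk0 hcon
      have h1 : ζ ^ q ^ k = ζ := by rw [← hσpow k, hcon]; rfl
      have hqk1 : 1 ≤ q ^ k := Nat.one_le_pow _ _ (by omega)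
      have h2 : ζ ^ (q ^ k - 1) = 1 := by
        have hζ0 : ζ ≠ 0 := hζ.ne_zero hmpos.ne'
        have : ζ ^ (q ^ k - 1) * ζ = 1 * ζ := by
          rw [← pow_succ, one_mul]
          rw [show q ^ k - 1 + 1 = q ^ k by omega, h1]
        exact mul_right_cancel₀ hζ0 this
      have h3 : ℓ ^ i ∣ q ^ k - 1 := (hζ.pow_eq_one_iff_dvd _).1 h2
      have h4 : ℓ ∣ q ^ k - 1 := (dvd_pow_self ℓ (by omega : i ≠ 0)).trans h3
      obtain ⟨c, hc⟩ := h4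
      have h5 : q ^ k = ℓ * c + 1 := by omega
      have h6 : (q : ZMod ℓ) ^ k = 1 := by
        have : ((q ^ k : ℕ) : ZMod ℓ) = ((ℓ * c + 1 : ℕ) : ZMod ℓ) := by rw [h5]
        push_cast [ZMod.natCast_self] at this
        simpa using this
      have h7 : n ∣ k := hn ▸ orderOf_dvd_of_pow_eq_one h6
      have := Nat.le_of_dvd (by omega) h7
      omega
  have hωfix : σ ω = ω := by
    rw [hωdef, map_sum]
    have hterm : ∀ j ∈ Finset.range n, σ (ζ ^ q ^ j) = ζ ^ q ^ (j + 1) := by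
      intro j _
      rw [map_pow, hσ, ← pow_mul, ← pow_succ']
    rw [Finset.sum_congr rfl hterm]
    have h1 := Finset.sum_range_succ (fun j => ζ ^ q ^ j) n
    have h2 := Finset.sum_range_succ' (fun j => ζ ^ q ^ j) n
    simp only [pow_zero, pow_one, hζqn] at h1 h2
    rw [h1] at h2
    linear_combination -h2
  set M := IntermediateField.fixedField (Subgroup.zpowers σ) with hMdef
  have hωM : ω ∈ M := by
    intro g
    have hg : (g : L ≃ₐ[ℚ_[ℓ]] L) ∈ MulAction.stabilizer (L ≃ₐ[ℚ_[ℓ]] L) ω :=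
      Subgroup.zpowers_le.2 (MulAction.mem_stabilizer_iff.2 hωfix) g.2
    exact MulAction.mem_stabilizer_iff.1 hg
  have hML : Module.finrank M L = n := by
    rw [hMdef, IntermediateField.finrank_fixedField_eq_card, Nat.card_zpowers, horder]

  -- ================= Part 2 : the unit decomposition =================
  set R : Subalgebra ℤ_[ℓ] L := integralClosure ℤ_[ℓ] L with hRdef
  have hζR : ζ ∈ R := hζint
  have hπR : π ∈ R := sub_mem hζR (one_mem R)
  have hgeom : ∀ a : ℕ, ζ ^ a - 1 = π * ∑ t ∈ Finset.range a, ζ ^ t := by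
    intro a
    rw [hπdef, mul_comm]
    exact (geom_sum_mul ζ a).symm
  have hgeomR : ∀ a : ℕ, (∑ t ∈ Finset.range a, ζ ^ t) ∈ R :=
    fun a => sum_mem fun t _ => pow_mem hζR t
  set φ := (ℓ ^ i).totient with hφdef
  have hφn : n ≤ φ := by
    rw [hφdef, Nat.totient_prime_pow hp hi]
    calc n ≤ ℓ - 1 := by omega
    _ = 1 * (ℓ - 1) := (one_mul _).symm
    _ ≤ ℓ ^ (i - 1) * (ℓ - 1) := Nat.mul_le_mul_right _ (Nat.one_le_pow _ _ (by omega))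
  have hφ1 : 1 ≤ φ := by omega
  obtain ⟨c, hcR, hc⟩ : ∃ c ∈ R, (ℓ : L) = π ^ φ * c := by
    have h1 : Polynomial.eval 1 (Polynomial.cyclotomic (ℓ ^ i) L) = (ℓ : L) := by
      obtain ⟨j, hj⟩ : ∃ j, i = j + 1 := ⟨i - 1, by omega⟩
      rw [hj]
      exact Polynomial.eval_one_cyclotomic_prime_pow _
    have h2 : Polynomial.cyclotomic (ℓ ^ i) L
        = ∏ μ ∈ primitiveRoots (ℓ ^ i) L, (Polynomial.X - Polynomial.C μ) :=
      Polynomial.cyclotomic_eq_prod_X_sub_primitiveRoots hζ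
    have h3 : (ℓ : L) = ∏ μ ∈ primitiveRoots (ℓ ^ i) L, (1 - μ) := by
      rw [← h1, h2, Polynomial.eval_prod]
      refine Finset.prod_congr rfl fun μ _ => ?_
      simp
    obtain ⟨c, hcR, hprod⟩ := aux_prod_factor R π (primitiveRoots (ℓ ^ i) L)
      (fun μ => 1 - μ) (by
        intro μ hμ
        have hμ1 : μ ^ ℓ ^ i = 1 := ((mem_primitiveRoots hmpos).1 hμ).pow_eq_one
        obtain ⟨a, _, ha⟩ := hζ.eq_pow_of_pow_eq_one hμ1
        refine ⟨-(∑ t ∈ Finset.range a, ζ ^ t), neg_mem (hgeomR a), ?_⟩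
        rw [mul_neg, ← hgeom a, ← ha]
        ring)
    refine ⟨c, hcR, ?_⟩
    rw [h3, hprod, hζ.card_primitiveRoots]
  set N := q ^ (n - 1) with hNdef
  have hnN : n ≤ N := by
    have h1 : n - 1 < 2 ^ (n - 1) := Nat.lt_two_pow_self
    have h2 : 2 ^ (n - 1) ≤ q ^ (n - 1) := Nat.pow_le_pow_left hq2 _
    omega
  set S : ℕ → ℕ := fun k => ∑ j ∈ Finset.range n, (q ^ j).choose k with hSdef
  have harith := aux_arith ℓ q n hn h2n hnℓ
  have hζ1π : ζ = π + 1 := by rw [hπdef]; ring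
  have hbin : ∀ j ∈ Finset.range n, ζ ^ q ^ j
      = ∑ k ∈ Finset.range (N + 1), ((q ^ j).choose k : L) * π ^ k := by
    intro j hj
    rw [Finset.mem_range] at hj
    have hqjN : q ^ j ≤ N := Nat.pow_le_pow_right (by omega) (by omega)
    rw [hζ1π]
    calc (π + 1) ^ q ^ j
        = ∑ k ∈ Finset.range (q ^ j + 1), ((q ^ j).choose k : L) * π ^ k := by
          rw [add_pow]
          refine Finset.sum_congr rfl fun k _ => ?_
          rw [one_pow, mul_one, mul_comm]
      _ = ∑ k ∈ Finset.range (N + 1), ((q ^ j).choose k : L) * π ^ k := by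
          refine Finset.sum_subset (Finset.range_subset_range.2 (by omega)) ?_
          intro k hk hnk
          rw [Finset.mem_range] at hk
          rw [Finset.mem_range, not_lt] at hnk
          rw [Nat.choose_eq_zero_of_lt (by omega)]
          simp
  have hωsum : ω = ∑ k ∈ Finset.range (N + 1), (S k : L) * π ^ k := by
    rw [hωdef, Finset.sum_congr rfl hbin, Finset.sum_comm]
    refine Finset.sum_congr rfl fun k _ => ?_
    simp only [hSdef]
    rw [Nat.cast_sum, Finset.sum_mul]
  have hω1 : ω - (n : L) = ∑ k ∈ Finset.Ico 1 (N + 1), (S k : L) * π ^ k := by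
    have h0 : ∑ k ∈ Finset.range (N + 1), (S k : L) * π ^ k
        = (S 0 : L) * π ^ 0 + ∑ k ∈ Finset.Ico 1 (N + 1), (S k : L) * π ^ k := by
      rw [Finset.range_eq_Ico]
      exact Finset.sum_eq_sum_Ico_succ_bot (by omega) _
    have hS0 : S 0 = n := by simp [hSdef]
    rw [hωsum, h0, hS0, pow_zero, mul_one]
    ring
  obtain ⟨e₁, he₁R, he₁⟩ := aux_sum_factor R (π ^ (n + 1)) (Finset.Ico 1 n)
      (fun k => (S k : L) * π ^ k) (by
        intro k hk
        rw [Finset.mem_Ico] at hk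
        obtain ⟨s, hs⟩ := harith.1 k hk.1 hk.2
        refine ⟨π ^ (φ + k - n - 1) * (c * (s : L)),
          mul_mem (pow_mem hπR _) (mul_mem hcR (natCast_mem R s)), ?_⟩
        show (S k : L) * π ^ k = π ^ (n + 1) * (π ^ (φ + k - n - 1) * (c * (s : L)))
        simp only [hSdef]
        rw [hs, Nat.cast_mul, hc]
        have hexp : π ^ φ * π ^ k = π ^ (n + 1) * π ^ (φ + k - n - 1) := by
          rw [← pow_add, ← pow_add]
          congr 1
          omega
        calc π ^ φ * c * (s : L) * π ^ k = π ^ φ * π ^ k * (c * (s : L)) := by ring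
        _ = π ^ (n + 1) * π ^ (φ + k - n - 1) * (c * (s : L)) := by rw [hexp]
        _ = π ^ (n + 1) * (π ^ (φ + k - n - 1) * (c * (s : L))) := by ring)
  have hsplit : ∑ k ∈ Finset.Ico 1 n, (S k : L) * π ^ k
      + ∑ k ∈ Finset.Ico n (N + 1), (S k : L) * π ^ k
      = ∑ k ∈ Finset.Ico 1 (N + 1), (S k : L) * π ^ k :=
    Finset.sum_Ico_consecutive _ (by omega) (by omega)
  have hsplit2 : ∑ k ∈ Finset.Ico n (N + 1), (S k : L) * π ^ k
      = (S n : L) * π ^ n + ∑ k ∈ Finset.Ico (n + 1) (N + 1), (S k : L) * π ^ k :=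
    Finset.sum_eq_sum_Ico_succ_bot (by omega) _
  obtain ⟨e₂, he₂R, he₂⟩ := aux_sum_factor R (π ^ (n + 1)) (Finset.Ico (n + 1) (N + 1))
      (fun k => (S k : L) * π ^ k) (by
        intro k hk
        rw [Finset.mem_Ico] at hk
        refine ⟨(S k : L) * π ^ (k - n - 1), mul_mem (natCast_mem R _) (pow_mem hπR _), ?_⟩
        show (S k : L) * π ^ k = π ^ (n + 1) * ((S k : L) * π ^ (k - n - 1))
        have hexp : π ^ k = π ^ (n + 1) * π ^ (k - n - 1) := by
          rw [← pow_add]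
          congr 1
          omega
        rw [hexp]
        ring)
  set u := (S n : L) + π * (e₁ + e₂) with hudef
  have huR : u ∈ R := add_mem (natCast_mem R _) (mul_mem hπR (add_mem he₁R he₂R))
  have hωπu : ω - (n : L) = π ^ n * u := by
    rw [hω1, ← hsplit, he₁, hsplit2, he₂, hudef]
    ring
  -- π is not a unit of R
  have hπnu : ¬∃ y ∈ R, π * y = 1 := by
    rintro ⟨y, hyR, hy1⟩
    have h1 : Algebra.norm ℚ_[ℓ] π * Algebra.norm ℚ_[ℓ] y = 1 := by
      rw [← map_mul, hy1, map_one]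
    obtain ⟨z, hz⟩ := IsIntegrallyClosed.isIntegral_iff.1
      (Algebra.isIntegral_norm ℚ_[ℓ] (hyR : IsIntegral ℤ_[ℓ] y))
    have h4 : (ℓ : ℤ_[ℓ]) * z = 1 := by
      apply IsFractionRing.injective ℤ_[ℓ] ℚ_[ℓ]
      rw [map_mul, map_natCast, map_one, hz, ← hNπ]
      exact h1
    have h5 : IsUnit (ℓ : ℤ_[ℓ]) := IsUnit.of_mul_eq_one _ h4
    rw [PadicInt.isUnit_iff, PadicInt.norm_p] at h5
    have h2 : (2 : ℝ) ≤ (ℓ : ℝ) := by exact_mod_cast hp.two_le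
    rw [inv_eq_one] at h5
    norm_num [h5] at h2
  set g := Fintype.card (L ≃ₐ[ℚ_[ℓ]] L) with hgdef
  have hτuR : ∀ τ : L ≃ₐ[ℚ_[ℓ]] L, ∀ x : L, x ∈ R → τ x ∈ R := by
    intro τ x hx
    exact IsIntegral.map (τ.toAlgHom.restrictScalars ℤ_[ℓ]) (hx : IsIntegral ℤ_[ℓ] x)
  have happ : ∀ τ : L ≃ₐ[ℚ_[ℓ]] L, ∃ y ∈ R, τ u = (S n : L) + π * y := by
    intro τ
    have hτζ : (τ ζ) ^ ℓ ^ i = 1 := by rw [← map_pow, hζ.pow_eq_one, map_one]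
    obtain ⟨a, _, ha⟩ := hζ.eq_pow_of_pow_eq_one hτζ
    refine ⟨(∑ t ∈ Finset.range a, ζ ^ t) * τ (e₁ + e₂),
      mul_mem (hgeomR a) (hτuR τ _ (add_mem he₁R he₂R)), ?_⟩
    rw [hudef, map_add, map_mul, map_natCast]
    have hτπ : τ π = π * ∑ t ∈ Finset.range a, ζ ^ t := by
      rw [hπdef, map_sub, map_one, ← ha, hgeom a]
    rw [hτπ]
    ring
  obtain ⟨Y, hYR, hY⟩ := aux_prod_factor2 R π (S n : L) hπR (natCast_mem R _)
      Finset.univ (fun τ => τ u) (fun τ _ => happ τ)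
  obtain ⟨zN, hzN⟩ := IsIntegrallyClosed.isIntegral_iff.1
    (Algebra.isIntegral_norm ℚ_[ℓ] (huR : IsIntegral ℤ_[ℓ] u))
  have hNuL : algebraMap ℤ_[ℓ] L zN = (S n : L) ^ g + π * Y := by
    rw [IsScalarTower.algebraMap_apply ℤ_[ℓ] ℚ_[ℓ] L, hzN,
      Algebra.norm_eq_prod_automorphisms, hY, Finset.card_univ]
  have hzNunit : IsUnit zN := by
    by_contra hnu
    have hmem : zN ∈ IsLocalRing.maximalIdeal ℤ_[ℓ] := hnu
    rw [PadicInt.maximalIdeal_eq_span_p, Ideal.mem_span_singleton] at hmem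
    obtain ⟨t, ht⟩ := hmem
    have hπφ : π ^ φ = π * π ^ (φ - 1) := by
      rw [← pow_succ']
      congr 1
      omega
    have hπSn : ∃ y ∈ R, ((S n : L)) ^ g = π * y := by
      refine ⟨π ^ (φ - 1) * c * algebraMap ℤ_[ℓ] L t - Y,
        sub_mem (mul_mem (mul_mem (pow_mem hπR _) hcR) (R.algebraMap_mem t)) hYR, ?_⟩
      have h5 : algebraMap ℤ_[ℓ] L zN = (ℓ : L) * algebraMap ℤ_[ℓ] L t := by
        rw [ht, map_mul, map_natCast]
      rw [h5, hc, hπφ] at hNuL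
      linear_combination -hNuL
    obtain ⟨y, hyR, hy⟩ := hπSn
    have hcop : Nat.Coprime ℓ ((S n) ^ g) :=
      ((Nat.Prime.coprime_iff_not_dvd hp).2 harith.2).pow_right g
    have hbez := Nat.gcd_eq_gcd_ab ℓ ((S n) ^ g)
    rw [hcop] at hbez
    set A : L := ((Nat.gcdA ℓ ((S n) ^ g) : ℤ) : L) with hAdef
    set B : L := ((Nat.gcdB ℓ ((S n) ^ g) : ℤ) : L) with hBdef
    have hbezL : (1 : L) = (ℓ : L) * A + ((S n : L)) ^ g * B := by
      rw [hAdef, hBdef]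
      exact_mod_cast congrArg (fun z : ℤ => ((z : ℤ) : L)) hbez
    apply hπnu
    refine ⟨π ^ (φ - 1) * c * A + y * B,
      add_mem (mul_mem (mul_mem (pow_mem hπR _) hcR) (intCast_mem R _))
        (mul_mem hyR (intCast_mem R _)), ?_⟩
    have hfin : π * (π ^ (φ - 1) * c * A + y * B) = (ℓ : L) * A + ((S n : L)) ^ g * B := by
      rw [hc, hπφ, hy]
      ring
    rw [hfin, ← hbezL]
  set zinv := ((hzNunit.unit⁻¹ : ℤ_[ℓ]ˣ) : ℤ_[ℓ]) with hzinvdef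
  set v := algebraMap ℤ_[ℓ] L zinv * ∏ τ ∈ Finset.univ.erase (1 : L ≃ₐ[ℚ_[ℓ]] L), τ u
    with hvdef
  have hvR : v ∈ R :=
    mul_mem (R.algebraMap_mem _) (prod_mem fun τ _ => hτuR τ u huR)
  have hmulprod : u * ∏ τ ∈ Finset.univ.erase (1 : L ≃ₐ[ℚ_[ℓ]] L), τ u
      = ∏ τ : L ≃ₐ[ℚ_[ℓ]] L, τ u := by
    have h := Finset.mul_prod_erase Finset.univ (fun τ => τ u)
      (Finset.mem_univ (1 : L ≃ₐ[ℚ_[ℓ]] L))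
    simpa using h
  have hzz : zinv * zN = 1 := hzNunit.val_inv_mul
  have huv : u * v = 1 := by
    have hstep : u * v = algebraMap ℤ_[ℓ] L (zinv * zN) := by
      rw [hvdef, map_mul]
      calc u * (algebraMap ℤ_[ℓ] L zinv * ∏ τ ∈ Finset.univ.erase (1 : L ≃ₐ[ℚ_[ℓ]] L), τ u)
          = algebraMap ℤ_[ℓ] L zinv
            * (u * ∏ τ ∈ Finset.univ.erase (1 : L ≃ₐ[ℚ_[ℓ]] L), τ u) := by ring
        _ = algebraMap ℤ_[ℓ] L zinv * ∏ τ : L ≃ₐ[ℚ_[ℓ]] L, τ u := by rw [hmulprod]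
        _ = algebraMap ℤ_[ℓ] L zinv * algebraMap ℤ_[ℓ] L zN := by
            rw [show (∏ τ : L ≃ₐ[ℚ_[ℓ]] L, τ u)
                = algebraMap ℚ_[ℓ] L (Algebra.norm ℚ_[ℓ] u) from
              (Algebra.norm_eq_prod_automorphisms ℚ_[ℓ] u).symm, ← hzN,
              ← IsScalarTower.algebraMap_apply ℤ_[ℓ] ℚ_[ℓ] L]
    rw [hstep, hzz, map_one]
  set U : (integralClosure ℤ_[ℓ] L)ˣ :=
    ⟨⟨u, huR⟩, ⟨v, hvR⟩, Subtype.ext huv, Subtype.ext (by rw [mul_comm]; exact huv)⟩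
    with hUdef
  -- ================= Part 1 : the fixed field =================
  have hωR : ω ∈ R := by
    rw [hωdef]
    exact sum_mem fun j _ => pow_mem hζR _
  have hω'R : ω - (n : L) ∈ R := sub_mem hωR (natCast_mem R n)
  set F := IntermediateField.adjoin ℚ_[ℓ] {ω - (n : L)} with hFdef
  have hnM : ∀ (E : IntermediateField ℚ_[ℓ] L), ((n : L) ∈ E) := by
    intro E
    have h : algebraMap ℚ_[ℓ] L (n : ℚ_[ℓ]) = (n : L) := map_natCast _ n
    rw [← h]
    exact E.algebraMap_mem _
  have hFM : F ≤ M := by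
    rw [hFdef, IntermediateField.adjoin_le_iff]
    rintro y hy
    rw [Set.mem_singleton_iff] at hy
    subst hy
    exact sub_mem hωM (hnM M)
  set e := Module.finrank F L with hedef
  set fF := Module.finrank ℚ_[ℓ] F with hfFdef
  set fM := Module.finrank ℚ_[ℓ] M with hfMdef
  have h1 : fF * e = (ℓ ^ i).totient := by
    rw [hfFdef, hedef, Module.finrank_mul_finrank, hfinrank]
  have h2 : fM * n = (ℓ ^ i).totient := by
    rw [hfMdef, ← hML, Module.finrank_mul_finrank, hfinrank]
  have hfFle : fF ≤ fM := by
    have hinj : Function.Injective (IntermediateField.inclusion hFM) :=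
      (IntermediateField.inclusion hFM).injective
    exact LinearMap.finrank_le_finrank_of_injective
      (f := (IntermediateField.inclusion hFM).toLinearMap) hinj
  have hfF0 : 0 < fF := Module.finrank_pos
  have hen : n ≤ e := by
    by_contra h
    push_neg at h
    have h3 : fF * e < fM * n :=
      lt_of_lt_of_le ((Nat.mul_lt_mul_left hfF0).2 h) (Nat.mul_le_mul_right n hfFle)
    omega
  letI : Algebra ℤ_[ℓ] F := ((algebraMap ℚ_[ℓ] F).comp (algebraMap ℤ_[ℓ] ℚ_[ℓ])).toAlgebra
  letI : IsScalarTower ℤ_[ℓ] ℚ_[ℓ] F := IsScalarTower.of_algebraMap_eq fun x => rfl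
  letI : IsScalarTower ℤ_[ℓ] F L := IsScalarTower.of_algebraMap_eq fun x => by
    rw [IsScalarTower.algebraMap_apply ℤ_[ℓ] ℚ_[ℓ] L,
      show algebraMap ℤ_[ℓ] F x = algebraMap ℚ_[ℓ] F (algebraMap ℤ_[ℓ] ℚ_[ℓ] x) from rfl,
      ← IsScalarTower.algebraMap_apply ℚ_[ℓ] F L]
  haveI : Algebra.IsSeparable ℚ_[ℓ] F :=
    Algebra.isSeparable_tower_bot_of_isSeparable ℚ_[ℓ] F L
  set x₀ := IntermediateField.AdjoinSimple.gen ℚ_[ℓ] (ω - (n : L)) with hx₀def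
  have hx₀map : algebraMap F L x₀ = ω - (n : L) :=
    IntermediateField.AdjoinSimple.algebraMap_gen _ _
  have hx₀int : IsIntegral ℤ_[ℓ] x₀ :=
    (isIntegral_algebraMap_iff (algebraMap F L).injective).1
      (by rw [hx₀map]; exact hω'R)
  obtain ⟨za, hza⟩ := IsIntegrallyClosed.isIntegral_iff.1
    (Algebra.isIntegral_norm ℚ_[ℓ] hx₀int)
  have hnormtower : Algebra.norm ℚ_[ℓ] (ω - (n : L)) = (Algebra.norm ℚ_[ℓ] x₀) ^ e := by
    calc Algebra.norm ℚ_[ℓ] (ω - (n : L))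
        = Algebra.norm ℚ_[ℓ] (Algebra.norm F (ω - (n : L))) :=
          (Algebra.norm_norm (R := ℚ_[ℓ]) (S := F) (a := ω - (n : L))).symm
      _ = Algebra.norm ℚ_[ℓ] (x₀ ^ e) := by
          have h7 : Algebra.norm F (ω - (n : L)) = x₀ ^ e := by
            conv_lhs => rw [← hx₀map]
            rw [Algebra.norm_algebraMap, ← hedef]
          rw [h7]
      _ = (Algebra.norm ℚ_[ℓ] x₀) ^ e := map_pow _ _ _
  have hnormval : Algebra.norm ℚ_[ℓ] (ω - (n : L))
      = (ℓ : ℚ_[ℓ]) ^ n * algebraMap ℤ_[ℓ] ℚ_[ℓ] zN := by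
    rw [hωπu, map_mul, map_pow, hNπ, hzN]
  have hkey : za ^ e = (ℓ : ℤ_[ℓ]) ^ n * zN := by
    apply IsFractionRing.injective ℤ_[ℓ] ℚ_[ℓ]
    rw [map_pow, hza, map_mul, map_pow, map_natCast, ← hnormtower, hnormval]
  have hnorm1 : ‖za‖ ^ e = ((ℓ : ℝ))⁻¹ ^ n := by
    have h3 : ‖za ^ e‖ = ‖(ℓ : ℤ_[ℓ]) ^ n * zN‖ := by rw [hkey]
    rw [norm_mul, norm_pow, norm_pow, PadicInt.norm_p,
      PadicInt.isUnit_iff.1 hzNunit, mul_one] at h3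
    exact h3
  have hℓR1 : (1 : ℝ) < (ℓ : ℝ) := by exact_mod_cast hp.one_lt
  have hinv0 : (0 : ℝ) < ((ℓ : ℝ))⁻¹ := by positivity
  have hinvlt : ((ℓ : ℝ))⁻¹ < 1 := by
    rw [inv_lt_one_iff₀]
    right
    exact hℓR1
  have hzan1 : ‖za‖ ≠ 1 := by
    intro h
    rw [h, one_pow] at hnorm1
    have h4 := pow_lt_one₀ (le_of_lt hinv0) hinvlt (by omega : n ≠ 0)
    rw [← hnorm1] at h4
    exact lt_irrefl _ h4
  have hzasmall : ‖za‖ ≤ ((ℓ : ℝ))⁻¹ := by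
    have hnu : ¬IsUnit za := by rw [PadicInt.isUnit_iff]; exact hzan1
    have hmem : za ∈ IsLocalRing.maximalIdeal ℤ_[ℓ] := hnu
    rw [PadicInt.maximalIdeal_eq_span_p, Ideal.mem_span_singleton] at hmem
    obtain ⟨t, ht⟩ := hmem
    rw [ht, norm_mul, PadicInt.norm_p]
    calc (ℓ : ℝ)⁻¹ * ‖t‖ ≤ (ℓ : ℝ)⁻¹ * 1 := by
          gcongr
          exact PadicInt.norm_le_one t
      _ = (ℓ : ℝ)⁻¹ := mul_one _
  have hele : e ≤ n := by
    by_contra h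
    push_neg at h
    have h4 : ((ℓ : ℝ))⁻¹ ^ e < ((ℓ : ℝ))⁻¹ ^ n :=
      pow_lt_pow_right_of_lt_one₀ hinv0 hinvlt h
    have h5 : ‖za‖ ^ e ≤ ((ℓ : ℝ))⁻¹ ^ e := pow_le_pow_left₀ (norm_nonneg _) hzasmall e
    rw [hnorm1] at h5
    linarith
  have hen' : e = n := le_antisymm hele hen
  have hfFfM : fF = fM := by
    rw [hen'] at h1
    exact Nat.eq_of_mul_eq_mul_right (by omega) (h1.trans h2.symm)
  have hFMeq : F = M := IntermediateField.eq_of_le_of_finrank_eq hFM hfFfM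
  have hadj : IntermediateField.adjoin ℚ_[ℓ] {ω} = F := by
    rw [hFdef]
    apply le_antisymm
    · rw [IntermediateField.adjoin_le_iff]
      rintro y hy
      rw [Set.mem_singleton_iff] at hy
      subst hy
      have hmm : (ω - (n : L)) + (n : L) ∈ IntermediateField.adjoin ℚ_[ℓ] {ω - (n : L)} :=
        add_mem (IntermediateField.mem_adjoin_simple_self _ _) (hnM _)
      simpa using hmm
    · rw [IntermediateField.adjoin_le_iff]
      rintro y hy
      rw [Set.mem_singleton_iff] at hy
      subst hy
      exact sub_mem (IntermediateField.mem_adjoin_simple_self _ _) (hnM _)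
  exact ⟨(hadj.trans hFMeq).symm, U, hωπu⟩
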